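/- In the product array G = T ⊗ S with T a half de Bruijn sequence of order k and S a de Bruijn sequence of order n, the minimum Hamming distance between two distinct k × n windows of G is exactly min(k, n): any two distinct windows differ in at least min(k,n) entries, and there exist two distinct windows differing in exactly k entries (one full column) and two differing in exactly n entries (one full row). -/

import Mathlib

/-- Window of length `m` starting at position `i` in a cyclic binary sequence of length `L`. -/
def cycWindow (L m : ℕ) (S : ℕ → Bool) (i : ℕ) : Fin m → Bool :=
  fun a => S ((i + (a : ℕ)) % L)

/-- A binary de Bruijn sequence of order `n`: a cyclic sequence of length `2^n` in which
every binary `n`-tuple appears exactly once as a cyclic window. -/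
def IsDeBruijn (n : ℕ) (S : ℕ → Bool) : Prop :=
  ∀ X : Fin n → Bool, ∃! i : Fin (2 ^ n), cycWindow (2 ^ n) n S (i : ℕ) = X

/-- A half de Bruijn sequence of order `n`: a cyclic binary sequence of length `2^(n-1)` in
which, for every binary `n`-tuple `X`, exactly one of `X` and its bitwise complement appears,
and it appears exactly once, as a cyclic window. -/
def IsHalfDeBruijn (n : ℕ) (T : ℕ → Bool) : Prop :=
  ∀ X : Fin n → Bool, ∃! i : Fin (2 ^ (n - 1)),
    cycWindow (2 ^ (n - 1)) n T (i : ℕ) = X ∨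
    cycWindow (2 ^ (n - 1)) n T (i : ℕ) = fun a => !(X a)

/-- An M-sequence of order `m`: a cyclic binary sequence of length `2^m - 1` in which every
nonzero binary `m`-tuple appears exactly once as a cyclic window. -/
def IsMSequence (m : ℕ) (S : ℕ → Bool) : Prop :=
  ∀ X : Fin m → Bool, X ≠ (fun _ => false) →
    ∃! i : Fin (2 ^ m - 1), cycWindow (2 ^ m - 1) m S (i : ℕ) = X

theorem card_filter_not_iff {α β : Type*} [Fintype α] [Fintype β] [DecidableEq α] [DecidableEq β]
    (P : α → Prop) (Q : β → Prop) [DecidablePred P] [DecidablePred Q] :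
    (Finset.univ.filter (fun x : α × β => ¬(P x.1 ↔ Q x.2))).card =
      (Finset.univ.filter P).card * (Finset.univ.filter (fun b => ¬ Q b)).card +
      (Finset.univ.filter (fun a => ¬ P a)).card * (Finset.univ.filter Q).card := by
  have hset : (Finset.univ.filter (fun x : α × β => ¬(P x.1 ↔ Q x.2))) =
      ((Finset.univ.filter P) ×ˢ (Finset.univ.filter fun b => ¬ Q b)) ∪
      ((Finset.univ.filter fun a => ¬ P a) ×ˢ (Finset.univ.filter Q)) := by
    ext x
    simp only [Finset.mem_filter, Finset.mem_univ, true_and, Finset.mem_union,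
      Finset.mem_product]
    tauto
  rw [hset, Finset.card_union_of_disjoint, Finset.card_product, Finset.card_product]
  rw [Finset.disjoint_left]
  rintro x hx hx'
  simp only [Finset.mem_product, Finset.mem_filter, Finset.mem_univ, true_and] at hx hx'
  tauto

/-- The minimum Hamming distance between two distinct `k x n` windows of the product array is
exactly `min k n`: any two distinct windows differ in at least `min k n` entries, some pair of
distinct windows differs in exactly `k` entries (a full column), and some pair differs in
exactly `n` entries (a full row). -/
theorem window_min_distance (k n K N : ℕ) (hk : 0 < k) (hn : 0 < n)
    (hK : K = 2 ^ (k - 1)) (hN : N = 2 ^ n)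
    (T S : ℕ → Bool) (hT : IsHalfDeBruijn k T) (hS : IsDeBruijn n S)
    (W : Fin K × Fin N → Fin k → Fin n → Bool)
    (hW : ∀ p a b, W p a b =
      xor (T (((p.1 : ℕ) + (a : ℕ)) % K)) (S (((p.2 : ℕ) + (b : ℕ)) % N))) :
    (∀ p q : Fin K × Fin N, p ≠ q →
      min k n ≤ (Finset.univ.filter
        (fun x : Fin k × Fin n => W p x.1 x.2 ≠ W q x.1 x.2)).card) ∧
    (∃ p q : Fin K × Fin N, p ≠ q ∧
      (Finset.univ.filter (fun x : Fin k × Fin n => W p x.1 x.2 ≠ W q x.1 x.2)).card = k) ∧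
    (∃ p q : Fin K × Fin N, p ≠ q ∧
      (Finset.univ.filter (fun x : Fin k × Fin n => W p x.1 x.2 ≠ W q x.1 x.2)).card = n) := by
  unfold IsHalfDeBruijn at hT
  unfold IsDeBruijn at hS
  rw [← hK] at hT
  rw [← hN] at hS
  have hKpos : 0 < K := hK ▸ Nat.two_pow_pos _
  have hNpos : 0 < N := hN ▸ Nat.two_pow_pos _
  -- the general card formula
  have hcard : ∀ p q : Fin K × Fin N,
      (Finset.univ.filter (fun x : Fin k × Fin n => W p x.1 x.2 ≠ W q x.1 x.2)).card =
      (Finset.univ.filter (fun a : Fin k =>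
          T (((p.1 : ℕ) + (a : ℕ)) % K) = T (((q.1 : ℕ) + (a : ℕ)) % K))).card *
        (Finset.univ.filter (fun b : Fin n =>
          ¬ (S (((p.2 : ℕ) + (b : ℕ)) % N) = S (((q.2 : ℕ) + (b : ℕ)) % N)))).card +
      (Finset.univ.filter (fun a : Fin k =>
          ¬ (T (((p.1 : ℕ) + (a : ℕ)) % K) = T (((q.1 : ℕ) + (a : ℕ)) % K)))).card *
        (Finset.univ.filter (fun b : Fin n =>
          S (((p.2 : ℕ) + (b : ℕ)) % N) = S (((q.2 : ℕ) + (b : ℕ)) % N))).card := by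
    intro p q
    rw [← card_filter_not_iff]
    congr 1
    apply Finset.filter_congr
    intro x _
    rw [hW, hW]
    generalize T (((p.1 : ℕ) + (x.1 : ℕ)) % K) = t1
    generalize T (((q.1 : ℕ) + (x.1 : ℕ)) % K) = t2
    generalize S (((p.2 : ℕ) + (x.2 : ℕ)) % N) = s1
    generalize S (((q.2 : ℕ) + (x.2 : ℕ)) % N) = s2
    cases t1 <;> cases t2 <;> cases s1 <;> cases s2 <;> simp
  -- injectivity of S-windows
  have hSinj : ∀ i j : Fin N, cycWindow N n S i = cycWindow N n S j → i = j := by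
    intro i j h
    obtain ⟨w, _, hu⟩ := hS (cycWindow N n S (j : ℕ))
    exact (hu i h).trans (hu j rfl).symm
  -- separation for T-windows
  have hTsep : ∀ i j : Fin K, i ≠ j →
      (∃ a : Fin k, T (((i:ℕ) + (a:ℕ)) % K) ≠ T (((j:ℕ) + (a:ℕ)) % K)) ∧
      (∃ a : Fin k, T (((i:ℕ) + (a:ℕ)) % K) = T (((j:ℕ) + (a:ℕ)) % K)) := by
    intro i j hij
    obtain ⟨w, _, hu⟩ := hT (cycWindow K k T (i : ℕ))
    have hiw : i = w := hu i (Or.inl rfl)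
    constructor
    · by_contra h
      push_neg at h
      have : cycWindow K k T (j : ℕ) = cycWindow K k T (i : ℕ) := by
        funext a; exact (h a).symm
      exact hij (hiw.trans ((hu j (Or.inl this)).symm))
    · by_contra h
      push_neg at h
      have : cycWindow K k T (j : ℕ) = fun a => !(cycWindow K k T (i : ℕ) a) := by
        funext a
        have := h a
        revert this
        unfold cycWindow
        cases T (((i:ℕ) + (a:ℕ)) % K) <;> cases T (((j:ℕ) + (a:ℕ)) % K) <;> simp
      exact hij (hiw.trans ((hu j (Or.inr this)).symm))
  refine ⟨?_, ?_, ?_⟩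
  · -- lower bound
    intro p q hpq
    rw [hcard p q]
    by_cases h1 : p.1 = q.1
    · have h2 : p.2 ≠ q.2 := by
        intro h2; exact hpq (Prod.ext h1 h2)
      have hTeq : (Finset.univ.filter (fun a : Fin k =>
          T (((p.1 : ℕ) + (a : ℕ)) % K) = T (((q.1 : ℕ) + (a : ℕ)) % K))) = Finset.univ := by
        apply Finset.filter_true_of_mem
        intro a _; rw [h1]
      have hSne : ∃ b : Fin n,
          ¬ (S (((p.2 : ℕ) + (b : ℕ)) % N) = S (((q.2 : ℕ) + (b : ℕ)) % N)) := by
        by_contra h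
        push_neg at h
        exact h2 (hSinj p.2 q.2 (funext fun b => h b))
      obtain ⟨b, hb⟩ := hSne
      have hB : 1 ≤ (Finset.univ.filter (fun b : Fin n =>
          ¬ (S (((p.2 : ℕ) + (b : ℕ)) % N) = S (((q.2 : ℕ) + (b : ℕ)) % N)))).card := by
        exact Finset.card_pos.mpr ⟨b, Finset.mem_filter.mpr ⟨Finset.mem_univ b, hb⟩⟩
      rw [hTeq, Finset.card_univ, Fintype.card_fin]
      calc min k n ≤ k := min_le_left _ _
        _ = k * 1 := (mul_one k).symm
        _ ≤ k * (Finset.univ.filter (fun b : Fin n =>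
            ¬ (S (((p.2 : ℕ) + (b : ℕ)) % N) = S (((q.2 : ℕ) + (b : ℕ)) % N)))).card :=
          Nat.mul_le_mul_left k hB
        _ ≤ _ := Nat.le_add_right _ _
    · obtain ⟨⟨a1, ha1⟩, ⟨a2, ha2⟩⟩ := hTsep p.1 q.1 h1
      have hA1 : 1 ≤ (Finset.univ.filter (fun a : Fin k =>
          ¬ (T (((p.1 : ℕ) + (a : ℕ)) % K) = T (((q.1 : ℕ) + (a : ℕ)) % K)))).card :=
        Finset.card_pos.mpr ⟨a1, Finset.mem_filter.mpr ⟨Finset.mem_univ a1, ha1⟩⟩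
      have hA2 : 1 ≤ (Finset.univ.filter (fun a : Fin k =>
          T (((p.1 : ℕ) + (a : ℕ)) % K) = T (((q.1 : ℕ) + (a : ℕ)) % K))).card :=
        Finset.card_pos.mpr ⟨a2, Finset.mem_filter.mpr ⟨Finset.mem_univ a2, ha2⟩⟩
      have hsum : (Finset.univ.filter (fun b : Fin n =>
            ¬ (S (((p.2 : ℕ) + (b : ℕ)) % N) = S (((q.2 : ℕ) + (b : ℕ)) % N)))).card +
          (Finset.univ.filter (fun b : Fin n =>
            S (((p.2 : ℕ) + (b : ℕ)) % N) = S (((q.2 : ℕ) + (b : ℕ)) % N))).card = n := by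
        rw [Nat.add_comm, Finset.card_filter_add_card_filter_not, Finset.card_univ,
          Fintype.card_fin]
      calc min k n ≤ n := min_le_right _ _
        _ = _ := hsum.symm
        _ ≤ _ := Nat.add_le_add
            (Nat.le_mul_of_pos_left _ hA2) (Nat.le_mul_of_pos_left _ hA1)
  · -- exact distance k : one full column
    have b0 : Fin n := ⟨0, hn⟩
    obtain ⟨i, hi, _⟩ := hS (fun _ => false)
    obtain ⟨j, hj, _⟩ := hS (fun b => decide (b = ⟨0, hn⟩))
    have hij : i ≠ j := by
      intro h
      have h2 := congrFun (hi.symm.trans (h ▸ hj)) ⟨0, hn⟩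
      simp at h2
    refine ⟨(⟨0, hKpos⟩, i), (⟨0, hKpos⟩, j), ?_, ?_⟩
    · simp [Prod.ext_iff, hij]
    · rw [hcard]
      have hTeq : (Finset.univ.filter (fun a : Fin k =>
          T (((0 : ℕ) + (a : ℕ)) % K) = T (((0 : ℕ) + (a : ℕ)) % K))) = Finset.univ := by
        apply Finset.filter_true_of_mem; intro a _; rfl
      have hTne : (Finset.univ.filter (fun a : Fin k =>
          ¬ (T (((0 : ℕ) + (a : ℕ)) % K) = T (((0 : ℕ) + (a : ℕ)) % K)))) = ∅ := by
        apply Finset.filter_false_of_mem; intro a _; simp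
      have hSne : (Finset.univ.filter (fun b : Fin n =>
          ¬ (S (((i : ℕ) + (b : ℕ)) % N) = S (((j : ℕ) + (b : ℕ)) % N)))) = {⟨0, hn⟩} := by
        ext b
        have h1 : S (((i : ℕ) + (b : ℕ)) % N) = false := congrFun hi b
        have h2 : S (((j : ℕ) + (b : ℕ)) % N) = decide (b = ⟨0, hn⟩) := congrFun hj b
        simp [h1, h2]
      simp only [hTeq, hTne, hSne]
      simp
  · -- exact distance n
    by_cases hk2 : 2 ≤ k
    · -- use the half de Bruijn property
      set X : Fin k → Bool := cycWindow K k T 0 with hX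
      set a0 : Fin k := ⟨0, hk⟩ with ha0
      set X' : Fin k → Bool := fun a => if a = a0 then !(X a) else X a with hX'
      obtain ⟨i, hi, _⟩ := hT X'
      have hXa0 : X' a0 = !(X a0) := by simp [hX']
      have hXa1 : X' ⟨1, hk2⟩ = X ⟨1, hk2⟩ := by
        have : (⟨1, hk2⟩ : Fin k) ≠ a0 := by
          intro h; simpa [ha0, Fin.ext_iff] using h
        simp [hX', this]
      have hine : (i : ℕ) ≠ 0 := by
        intro h0
        have h0' : cycWindow K k T (i : ℕ) = X := by rw [h0, hX]
        rcases hi with hi1 | hi2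
        · have h := congrFun (h0'.symm.trans hi1) a0
          rw [hXa0] at h
          revert h
          cases X a0 <;> simp
        · have h := congrFun (h0'.symm.trans hi2) ⟨1, hk2⟩
          rw [hXa1] at h
          revert h
          cases X ⟨1, hk2⟩ <;> simp
      rcases hi with hi1 | hi2
      · -- window i = X' : differs from X in exactly position a0; same S column
        refine ⟨(⟨0, hKpos⟩, ⟨0, hNpos⟩), (i, ⟨0, hNpos⟩), ?_, ?_⟩
        · intro h
          rw [Prod.ext_iff] at h
          exact hine (congrArg Fin.val h.1.symm)
        · rw [hcard]
          have hSeq : (Finset.univ.filter (fun b : Fin n =>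
              S (((0 : ℕ) + (b : ℕ)) % N) = S (((0 : ℕ) + (b : ℕ)) % N))) = Finset.univ := by
            apply Finset.filter_true_of_mem; intro b _; rfl
          have hSne : (Finset.univ.filter (fun b : Fin n =>
              ¬ (S (((0 : ℕ) + (b : ℕ)) % N) = S (((0 : ℕ) + (b : ℕ)) % N)))) = ∅ := by
            apply Finset.filter_false_of_mem; intro b _; simp
          have hTne : (Finset.univ.filter (fun a : Fin k =>
              ¬ (T (((0 : ℕ) + (a : ℕ)) % K) = T (((i : ℕ) + (a : ℕ)) % K)))) = {a0} := by
            ext a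
            have h1 : T (((0 : ℕ) + (a : ℕ)) % K) = X a := rfl
            have h2 : T (((i : ℕ) + (a : ℕ)) % K) = X' a := congrFun hi1 a
            simp only [Finset.mem_filter, Finset.mem_univ, true_and, Finset.mem_singleton,
              h1, h2, hX']
            by_cases h : a = a0 <;> simp [h] <;> cases X a <;> simp
          simp only [hSeq, hSne, hTne]
          simp
      · -- window i = ¬X' : agrees with X exactly at a0; complementary S windows
        obtain ⟨is, his, _⟩ := hS (fun _ => false)
        obtain ⟨js, hjs, _⟩ := hS (fun _ => true)
        refine ⟨(⟨0, hKpos⟩, is), (i, js), ?_, ?_⟩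
        · intro h
          rw [Prod.ext_iff] at h
          exact hine (congrArg Fin.val h.1.symm)
        · rw [hcard]
          have hSeq : (Finset.univ.filter (fun b : Fin n =>
              S (((is : ℕ) + (b : ℕ)) % N) = S (((js : ℕ) + (b : ℕ)) % N))) = ∅ := by
            apply Finset.filter_false_of_mem
            intro b _
            have h1 : S (((is : ℕ) + (b : ℕ)) % N) = false := congrFun his b
            have h2 : S (((js : ℕ) + (b : ℕ)) % N) = true := congrFun hjs b
            simp [h1, h2]
          have hSne : (Finset.univ.filter (fun b : Fin n =>
              ¬ (S (((is : ℕ) + (b : ℕ)) % N) = S (((js : ℕ) + (b : ℕ)) % N)))) =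
              Finset.univ := by
            apply Finset.filter_true_of_mem
            intro b _
            have h1 : S (((is : ℕ) + (b : ℕ)) % N) = false := congrFun his b
            have h2 : S (((js : ℕ) + (b : ℕ)) % N) = true := congrFun hjs b
            simp [h1, h2]
          have hTeq : (Finset.univ.filter (fun a : Fin k =>
              T (((0 : ℕ) + (a : ℕ)) % K) = T (((i : ℕ) + (a : ℕ)) % K))) = {a0} := by
            ext a
            have h1 : T (((0 : ℕ) + (a : ℕ)) % K) = X a := rfl
            have h2 : T (((i : ℕ) + (a : ℕ)) % K) = !(X' a) := congrFun hi2 a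
            simp only [Finset.mem_filter, Finset.mem_univ, true_and, Finset.mem_singleton,
              h1, h2, hX']
            by_cases h : a = a0 <;> simp [h] <;> cases X a <;> simp
          simp only [hSeq, hSne, hTeq]
          simp
    · -- k = 1 : complementary S windows
      have hk1 : k = 1 := by omega
      obtain ⟨is, his, _⟩ := hS (fun _ => false)
      obtain ⟨js, hjs, _⟩ := hS (fun _ => true)
      have hisjs : is ≠ js := by
        intro h
        have := congrFun (his.symm.trans (h ▸ hjs)) ⟨0, hn⟩
        simp at this
      refine ⟨(⟨0, hKpos⟩, is), (⟨0, hKpos⟩, js), ?_, ?_⟩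
      · simp [Prod.ext_iff, hisjs]
      · rw [hcard]
        have hSeq : (Finset.univ.filter (fun b : Fin n =>
            S (((is : ℕ) + (b : ℕ)) % N) = S (((js : ℕ) + (b : ℕ)) % N))) = ∅ := by
          apply Finset.filter_false_of_mem
          intro b _
          have h1 : S (((is : ℕ) + (b : ℕ)) % N) = false := congrFun his b
          have h2 : S (((js : ℕ) + (b : ℕ)) % N) = true := congrFun hjs b
          simp [h1, h2]
        have hSne : (Finset.univ.filter (fun b : Fin n =>
            ¬ (S (((is : ℕ) + (b : ℕ)) % N) = S (((js : ℕ) + (b : ℕ)) % N)))) =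
            Finset.univ := by
          apply Finset.filter_true_of_mem
          intro b _
          have h1 : S (((is : ℕ) + (b : ℕ)) % N) = false := congrFun his b
          have h2 : S (((js : ℕ) + (b : ℕ)) % N) = true := congrFun hjs b
          simp [h1, h2]
        have hTeq : (Finset.univ.filter (fun a : Fin k =>
            T (((0 : ℕ) + (a : ℕ)) % K) = T (((0 : ℕ) + (a : ℕ)) % K))) = Finset.univ := by
          apply Finset.filter_true_of_mem; intro a _; rfl
        have hTne : (Finset.univ.filter (fun a : Fin k =>
            ¬ (T (((0 : ℕ) + (a : ℕ)) % K) = T (((0 : ℕ) + (a : ℕ)) % K)))) = ∅ := by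
          apply Finset.filter_false_of_mem; intro a _; simp
        simp only [hSeq, hSne, hTeq, hTne]
        simp [hk1]
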